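/- Let g be a 6-dimensional Lie algebra with (1,0)-basis ω¹,ω²,ω³ satisfying dω¹ = A ω¹∧(ω³+ω̄³), dω² = −A ω²∧(ω³+ω̄³), dω³ = G₁₁ ω¹∧ω̄¹ + G₁₂ ω¹∧ω̄² + conj(G₁₂) ω²∧ω̄¹ + G₂₂ ω²∧ω̄², where |A| = 1, and let F be the Hermitian 2-form 2F = i(r²ω¹∧ω̄¹ + s²ω²∧ω̄² + t²ω³∧ω̄³) + u ω¹∧ω̄² − ū ω²∧ω̄¹ + v ω²∧ω̄³ − v̄ ω³∧ω̄² + z ω¹∧ω̄³ − z̄ ω³∧ω̄¹. Then ∂∂̄F = i t²(G₁₁G₂₂ − |G₁₂|²) ω¹²∧ω̄¹² − 2i r² (Re A)² ω¹³∧ω̄¹³ − 2i s² (Re A)² ω²³∧ω̄²³ + 2u (Im A)² ω¹³∧ω̄²³ − 2ū (Im A)² ω²³∧ω̄¹³. -/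

import Mathlib

noncomputable section

/-- The space of invariant complex forms: the exterior algebra over the span of
`ω¹, ω², ω³, ω̄¹, ω̄², ω̄³` (indexed `0,…,5`). -/
abbrev Lambda : Type := ExteriorAlgebra ℂ (Fin 6 → ℂ)

/-- The generators `ω¹, ω², ω³, ω̄¹, ω̄², ω̄³` as degree-one elements. -/
def w (i : Fin 6) : Lambda := ExteriorAlgebra.ι ℂ (Pi.single i 1)

/-- Antiderivation property (Leibniz rule against `1`-forms): the defining extension
property of (the bigraded pieces of) the Chevalley–Eilenberg differential. -/
def IsAntideriv (D : Lambda →ₗ[ℂ] Lambda) : Prop :=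
  D 1 = 0 ∧ ∀ (v : Fin 6 → ℂ) (x : Lambda),
    D (ExteriorAlgebra.ι ℂ v * x) =
      D (ExteriorAlgebra.ι ℂ v) * x - ExteriorAlgebra.ι ℂ v * D x

/-- The generic Hermitian form
`2F = i(r²ω¹∧ω̄¹ + s²ω²∧ω̄² + t²ω³∧ω̄³) + uω¹∧ω̄² − ūω²∧ω̄¹ + vω²∧ω̄³ − v̄ω³∧ω̄²
  + zω¹∧ω̄³ − z̄ω³∧ω̄¹`. -/
def Fherm (r s t : ℝ) (u v z : ℂ) : Lambda :=
  (1 / 2 : ℂ) •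
    (Complex.I • ((r : ℂ) ^ 2 • (w 0 * w 3) + (s : ℂ) ^ 2 • (w 1 * w 4) +
        (t : ℂ) ^ 2 • (w 2 * w 5)) +
      u • (w 0 * w 4) - (starRingEnd ℂ) u • (w 1 * w 3) +
      v • (w 1 * w 5) - (starRingEnd ℂ) v • (w 2 * w 4) +
      z • (w 0 * w 5) - (starRingEnd ℂ) z • (w 2 * w 3))

/-- Positivity constraints making `Fherm r s t u v z` a Hermitian metric. -/
def HermPos (r s t : ℝ) (u v z : ℂ) : Prop :=
  r ≠ 0 ∧ s ≠ 0 ∧ t ≠ 0 ∧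
  r ^ 2 * s ^ 2 > Complex.normSq u ∧ s ^ 2 * t ^ 2 > Complex.normSq v ∧
  r ^ 2 * t ^ 2 > Complex.normSq z ∧
  r ^ 2 * s ^ 2 * t ^ 2 +
      2 * (Complex.I * (starRingEnd ℂ) u * (starRingEnd ℂ) v * z).re >
    t ^ 2 * Complex.normSq u + r ^ 2 * Complex.normSq v + s ^ 2 * Complex.normSq z

lemma wsq (i : Fin 6) : w i * w i = 0 := ExteriorAlgebra.ι_sq_zero _

lemma wswap (i j : Fin 6) : w j * w i = -(w i * w j) := by
  have h := ExteriorAlgebra.ι_sq_zero (R := ℂ) ((Pi.single i 1 + Pi.single j 1 : Fin 6 → ℂ))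
  rw [map_add, add_mul, mul_add, mul_add] at h
  have hi : w i * w i = 0 := wsq i
  have hj : w j * w j = 0 := wsq j
  simp only [w] at hi hj ⊢
  rw [hi, hj, zero_add, add_zero] at h
  exact eq_neg_of_add_eq_zero_right h

lemma wsqr (i : Fin 6) (x : Lambda) : w i * (w i * x) = 0 := by
  rw [← mul_assoc, wsq, zero_mul]

lemma wswapr (i j : Fin 6) (x : Lambda) : w j * (w i * x) = -(w i * (w j * x)) := by
  rw [← mul_assoc, wswap, neg_mul, mul_assoc]


set_option maxHeartbeats 2000000 in
/-- the formula for `∂∂̄F` on the Lie algebras with structure equations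
`dω¹ = Aω¹∧(ω³+ω̄³)`, `dω² = −Aω²∧(ω³+ω̄³)`,
`dω³ = G₁₁ω¹∧ω̄¹ + G₁₂ω¹∧ω̄² + Ḡ₁₂ω²∧ω̄¹ + G₂₂ω²∧ω̄²`, with `|A| = 1`. -/
theorem stmt10 (A G12 : ℂ) (G11 G22 : ℝ) (hA : ‖A‖ = 1)
    (hJ1 : (A + (starRingEnd ℂ) A) * G11 = 0)
    (hJ2 : (A + (starRingEnd ℂ) A) * G22 = 0)
    (hJ3 : (A - (starRingEnd ℂ) A) * G12 = 0)
    (Dp Db : Lambda →ₗ[ℂ] Lambda) (hDp : IsAntideriv Dp) (hDb : IsAntideriv Db)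
    -- values of ∂ on the generators
    (hp0 : Dp (w 0) = A • (w 0 * w 2))
    (hp1 : Dp (w 1) = -A • (w 1 * w 2))
    (hp2 : Dp (w 2) = 0)
    (hp3 : Dp (w 3) = (starRingEnd ℂ) A • (w 3 * w 2))
    (hp4 : Dp (w 4) = -(starRingEnd ℂ) A • (w 4 * w 2))
    (hp5 : Dp (w 5) = (G11 : ℂ) • (w 3 * w 0) + (starRingEnd ℂ) G12 • (w 3 * w 1) +
      G12 • (w 4 * w 0) + (G22 : ℂ) • (w 4 * w 1))
    -- values of ∂̄ on the generators
    (hb0 : Db (w 0) = A • (w 0 * w 5))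
    (hb1 : Db (w 1) = -A • (w 1 * w 5))
    (hb2 : Db (w 2) = (G11 : ℂ) • (w 0 * w 3) + G12 • (w 0 * w 4) +
      (starRingEnd ℂ) G12 • (w 1 * w 3) + (G22 : ℂ) • (w 1 * w 4))
    (hb3 : Db (w 3) = (starRingEnd ℂ) A • (w 3 * w 5))
    (hb4 : Db (w 4) = -(starRingEnd ℂ) A • (w 4 * w 5))
    (hb5 : Db (w 5) = 0)
    (r s t : ℝ) (u v z : ℂ) (hF : HermPos r s t u v z) :
    Dp (Db (Fherm r s t u v z)) =
      (Complex.I * (t : ℂ) ^ 2 * ((G11 : ℂ) * G22 - (Complex.normSq G12 : ℂ))) •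
        (w 0 * w 1 * w 3 * w 4)
      - (2 * Complex.I * (r : ℂ) ^ 2 * (A.re : ℂ) ^ 2) • (w 0 * w 2 * w 3 * w 5)
      - (2 * Complex.I * (s : ℂ) ^ 2 * (A.re : ℂ) ^ 2) • (w 1 * w 2 * w 4 * w 5)
      + (2 * u * (A.im : ℂ) ^ 2) • (w 0 * w 2 * w 4 * w 5)
      - (2 * (starRingEnd ℂ) u * (A.im : ℂ) ^ 2) • (w 1 * w 2 * w 3 * w 5) := by
  have leibp : ∀ (i : Fin 6) (x : Lambda), Dp (w i * x) = Dp (w i) * x - w i * Dp x :=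
    fun i x => hDp.2 (Pi.single i 1) x
  have leibb : ∀ (i : Fin 6) (x : Lambda), Db (w i * x) = Db (w i) * x - w i * Db x :=
    fun i x => hDb.2 (Pi.single i 1) x
  simp only [Fherm, map_smul, map_add, map_sub, mul_assoc, leibb, hb0, hb1, hb2, hb3, hb4,
    hb5, smul_mul_assoc, mul_smul_comm, smul_smul, smul_add, smul_sub, sub_mul, add_mul,
    mul_sub, mul_add, mul_zero, zero_mul, smul_zero, sub_zero, zero_sub, map_neg, map_zero,
    neg_smul, smul_neg, mul_neg, neg_mul, neg_neg, leibp, hp0, hp1, hp2, hp3, hp4, hp5]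
  simp only [wsqr, wswapr 0 1, wswapr 0 2, wswapr 0 3, wswapr 0 4, wswapr 0 5,
    wswapr 1 2, wswapr 1 3, wswapr 1 4, wswapr 1 5, wswapr 2 3, wswapr 2 4, wswapr 2 5,
    wswapr 3 4, wswapr 3 5, wswapr 4 5, wsq, wswap 0 1, wswap 0 2, wswap 0 3, wswap 0 4,
    wswap 0 5, wswap 1 2, wswap 1 3, wswap 1 4, wswap 1 5, wswap 2 3, wswap 2 4, wswap 2 5,
    wswap 3 4, wswap 3 5, wswap 4 5, mul_neg, neg_mul, neg_neg, smul_neg, neg_smul,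
    mul_zero, zero_mul, smul_zero, mul_assoc]
  have hh1 : A + (starRingEnd ℂ) A = 2 * (A.re : ℂ) := by
    rw [Complex.add_conj]; push_cast; ring
  have hh2 : (A - (starRingEnd ℂ) A) ^ 2 = -(4 * (A.im : ℂ) ^ 2) := by
    rw [Complex.sub_conj]; push_cast
    linear_combination (4 * (A.im : ℂ) ^ 2) * Complex.I_sq
  have hJ4 : (A - (starRingEnd ℂ) A) * (starRingEnd ℂ) G12 = 0 := by
    have h := congrArg (starRingEnd ℂ) hJ3
    simp only [map_mul, map_sub, Complex.conj_conj, map_zero] at h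
    linear_combination -h
  have hns : ((Complex.normSq G12 : ℝ) : ℂ) = G12 * (starRingEnd ℂ) G12 :=
    (Complex.mul_conj G12).symm
  match_scalars
  all_goals first
    | ring1
    | linear_combination (1 / 2 : ℂ) * Complex.I * (t : ℂ) ^ 2 * hJ1 -
        (1 / 2 : ℂ) * Complex.I * (r : ℂ) ^ 2 * (A + (starRingEnd ℂ) A + 2 * (A.re : ℂ)) * hh1
    | linear_combination -(1 / 2 : ℂ) * Complex.I * (t : ℂ) ^ 2 * hJ2 -
        (1 / 2 : ℂ) * Complex.I * (s : ℂ) ^ 2 * (A + (starRingEnd ℂ) A + 2 * (A.re : ℂ)) * hh1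
    | linear_combination -(1 / 2 : ℂ) * Complex.I * (r : ℂ) ^ 2 * hJ2 +
        (1 / 2 : ℂ) * Complex.I * (s : ℂ) ^ 2 * hJ1 + (1 / 2 : ℂ) * u * hJ4 +
        (1 / 2 : ℂ) * (starRingEnd ℂ) u * hJ3 + Complex.I * (t : ℂ) ^ 2 * hns
    | linear_combination -(1 / 2 : ℂ) * u * hh2 + (1 / 2 : ℂ) * Complex.I * (t : ℂ) ^ 2 * hJ3
    | linear_combination (1 / 2 : ℂ) * (starRingEnd ℂ) u * hh2 -
        (1 / 2 : ℂ) * Complex.I * (t : ℂ) ^ 2 * hJ4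
    | linear_combination -(1 / 2 : ℂ) * (starRingEnd ℂ) v * hJ1 + (1 / 2 : ℂ) * (starRingEnd ℂ) z * hJ3
    | linear_combination (1 / 2 : ℂ) * (starRingEnd ℂ) v * hJ4 - (1 / 2 : ℂ) * (starRingEnd ℂ) z * hJ2
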